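/- The deformed Hamiltonian functions h_{z,1} = x²/2, h_{z,2} = −(1/2)·shc(zx²)·xy, h_{z,3} = (1/2)(shc(zx²)·y² + c/(x²·shc(zx²))) on ℝ²_{x≠0} satisfy the deformed Poisson brackets {h_{z,1},h_{z,2}} = −shc(2z·h_{z,1})·h_{z,1}, {h_{z,1},h_{z,3}} = −2h_{z,2}, {h_{z,2},h_{z,3}} = −cosh(2z·h_{z,1})·h_{z,3} with respect to the canonical Poisson bracket {f,g} = f_x g_y − f_y g_x. -/

import Mathlib

noncomputable def shc (x : ℝ) : ℝ := if x = 0 then 1 else Real.sinh x / x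

noncomputable def pbracket (f g : ℝ → ℝ → ℝ) (x y : ℝ) : ℝ :=
  deriv (fun x' => f x' y) x * deriv (fun y' => g x y') y -
    deriv (fun y' => f x y') y * deriv (fun x' => g x' y) x

theorem deformed_mp_brackets (z c : ℝ) (hz : z ≠ 0)
    (h₁ h₂ h₃ : ℝ → ℝ → ℝ)
    (H1 : ∀ x y : ℝ, h₁ x y = x ^ 2 / 2)
    (H2 : ∀ x y : ℝ, h₂ x y = -(1 / 2) * shc (z * x ^ 2) * x * y)
    (H3 : ∀ x y : ℝ, h₃ x y =
      (1 / 2) * (shc (z * x ^ 2) * y ^ 2 + c / (x ^ 2 * shc (z * x ^ 2)))) :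
    ∀ x y : ℝ, x ≠ 0 →
      pbracket h₁ h₂ x y = -(shc (2 * z * h₁ x y) * h₁ x y) ∧
      pbracket h₁ h₃ x y = -2 * h₂ x y ∧
      pbracket h₂ h₃ x y = -(Real.cosh (2 * z * h₁ x y) * h₃ x y) := by
  intro x y hx
  have hzx2 : z * x ^ 2 ≠ 0 := mul_ne_zero hz (pow_ne_zero 2 hx)
  have hs : Real.sinh (z * x ^ 2) ≠ 0 := by
    simpa [Real.sinh_eq_zero] using hzx2
  set s : ℝ := Real.sinh (z * x ^ 2) with hsdef
  set ch : ℝ := Real.cosh (z * x ^ 2) with hchdef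
  -- derivative building blocks
  have hsinh : HasDerivAt (fun x' : ℝ => Real.sinh (z * x' ^ 2))
      (ch * (z * (2 * x ^ 1))) x :=
    (((hasDerivAt_pow 2 x).const_mul z).sinh)
  -- x-derivative of h₁ slice
  have D1x : deriv (fun x' => h₁ x' y) x = x := by
    simp only [H1]
    have : HasDerivAt (fun x' : ℝ => x' ^ 2 / 2) ((2 * x ^ 1) / 2) x :=
      (hasDerivAt_pow 2 x).div_const 2
    rw [this.deriv]; ring
  have D1y : deriv (fun y' => h₁ x y') y = 0 := by
    simp [H1]
  -- y-derivatives
  have D2y : deriv (fun y' => h₂ x y') y = -(1 / 2) * shc (z * x ^ 2) * x := by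
    simp only [H2]
    have : HasDerivAt (fun y' : ℝ => -(1 / 2) * shc (z * x ^ 2) * x * y')
        (-(1 / 2) * shc (z * x ^ 2) * x) y := by
      simpa using (hasDerivAt_id y).const_mul (-(1 / 2) * shc (z * x ^ 2) * x)
    exact this.deriv
  have D3y : deriv (fun y' => h₃ x y') y = shc (z * x ^ 2) * y := by
    simp only [H3]
    have : HasDerivAt (fun y' : ℝ =>
        (1 / 2) * (shc (z * x ^ 2) * y' ^ 2 + c / (x ^ 2 * shc (z * x ^ 2))))
        ((1 / 2) * (shc (z * x ^ 2) * (2 * y ^ 1))) y := by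
      exact (((hasDerivAt_pow 2 y).const_mul (shc (z * x ^ 2))).add_const
        (c / (x ^ 2 * shc (z * x ^ 2)))).const_mul (1 / 2)
    rw [this.deriv]; ring
  -- eventual nonvanishing
  have hev : ∀ᶠ x' in nhds x, x' ≠ 0 := eventually_ne_nhds hx
  -- x-derivative of h₂ slice
  have hden2 : HasDerivAt (fun x' : ℝ => 2 * z * x') (2 * z) x := by
    simpa using (hasDerivAt_id x).const_mul (2 * z)
  have hF2 : HasDerivAt (fun x' : ℝ => -(Real.sinh (z * x' ^ 2) * y / (2 * z * x')))
      (-((ch * (z * (2 * x ^ 1)) * y * (2 * z * x) - s * y * (2 * z)) / (2 * z * x) ^ 2)) x := by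
    exact ((hsinh.mul_const y).div hden2 (by
      simpa [mul_assoc] using mul_ne_zero (mul_ne_zero (two_ne_zero) hz) hx)).neg
  have D2x : deriv (fun x' => h₂ x' y) x =
      -((ch * (z * (2 * x ^ 1)) * y * (2 * z * x) - s * y * (2 * z)) / (2 * z * x) ^ 2) := by
    have heq : (fun x' => h₂ x' y) =ᶠ[nhds x]
        (fun x' : ℝ => -(Real.sinh (z * x' ^ 2) * y / (2 * z * x'))) := by
      filter_upwards [hev] with x' hx'
      have hzx'2 : z * x' ^ 2 ≠ 0 := mul_ne_zero hz (pow_ne_zero 2 hx')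
      rw [H2, shc, if_neg hzx'2]
      field_simp
    rw [heq.deriv_eq, hF2.deriv]
  -- x-derivative of h₃ slice
  have hden3 : HasDerivAt (fun x' : ℝ => 2 * z * x' ^ 2) (2 * z * (2 * x ^ 1)) x := by
    simpa [mul_assoc] using (hasDerivAt_pow 2 x).const_mul (2 * z)
  have hT1 : HasDerivAt (fun x' : ℝ => Real.sinh (z * x' ^ 2) * y ^ 2 / (2 * z * x' ^ 2))
      ((ch * (z * (2 * x ^ 1)) * y ^ 2 * (2 * z * x ^ 2) - s * y ^ 2 * (2 * z * (2 * x ^ 1)))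
        / (2 * z * x ^ 2) ^ 2) x := by
    exact (hsinh.mul_const (y ^ 2)).div hden3 (by
      exact mul_ne_zero (mul_ne_zero two_ne_zero hz) (pow_ne_zero 2 hx))
  have hden4 : HasDerivAt (fun x' : ℝ => 2 * Real.sinh (z * x' ^ 2))
      (2 * (ch * (z * (2 * x ^ 1)))) x := hsinh.const_mul 2
  have hT2 : HasDerivAt (fun x' : ℝ => c * z / (2 * Real.sinh (z * x' ^ 2)))
      ((0 * (2 * s) - c * z * (2 * (ch * (z * (2 * x ^ 1))))) / (2 * s) ^ 2) x := by
    exact (hasDerivAt_const x (c * z)).div hden4 (mul_ne_zero two_ne_zero hs)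
  have D3x : deriv (fun x' => h₃ x' y) x =
      (ch * (z * (2 * x ^ 1)) * y ^ 2 * (2 * z * x ^ 2) - s * y ^ 2 * (2 * z * (2 * x ^ 1)))
        / (2 * z * x ^ 2) ^ 2
      + (0 * (2 * s) - c * z * (2 * (ch * (z * (2 * x ^ 1))))) / (2 * s) ^ 2 := by
    have heq : (fun x' => h₃ x' y) =ᶠ[nhds x]
        (fun x' : ℝ => Real.sinh (z * x' ^ 2) * y ^ 2 / (2 * z * x' ^ 2)
          + c * z / (2 * Real.sinh (z * x' ^ 2))) := by
      filter_upwards [hev] with x' hx'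
      have hzx'2 : z * x' ^ 2 ≠ 0 := mul_ne_zero hz (pow_ne_zero 2 hx')
      have hs' : Real.sinh (z * x' ^ 2) ≠ 0 := by
        simpa [Real.sinh_eq_zero] using hzx'2
      rw [H3, shc, if_neg hzx'2]
      field_simp
    rw [heq.deriv_eq]; exact (hT1.add hT2).deriv
  -- values of shc at the relevant points
  have hshc : shc (z * x ^ 2) = s / (z * x ^ 2) := by rw [shc, if_neg hzx2]
  have harg : 2 * z * h₁ x y = z * x ^ 2 := by rw [H1]; ring
  refine ⟨?_, ?_, ?_⟩
  · rw [pbracket, D1x, D2y, D1y, D2x, harg, H1, hshc]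
    field_simp
    ring
  · rw [pbracket, D1x, D3y, D1y, D3x, H2, hshc]
    field_simp
    ring
  · rw [pbracket, D2x, D3y, D2y, D3x, harg, H3, hshc]
    field_simp
    ring
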